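/- Let t be an element of a commutative ℚ-algebra and let N be a formal power series with constant term 1 satisfying N = 1 + (t-1)·x·N + x·N². Then 1 - tx - x(N - 1) is a unit and (1 - tx)/(1 - tx - x(N-1)) = (1 - tx)·N. -/

import Mathlib

open PowerSeries

theorem stmt8 (A : Type*) [CommRing A] [Algebra ℚ A] (t : A)
    (N : PowerSeries A) (hN0 : constantCoeff N = 1)
    (hN : N = 1 + (C t - 1) * X * N + X * N ^ 2) :
    IsUnit (1 - C t * X - X * (N - 1)) ∧
      (1 - C t * X - X * (N - 1)) * ((1 - C t * X) * N) = 1 - C t * X := by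
  have key : (1 - C t * X - X * (N - 1)) * N = 1 := by linear_combination hN
  exact ⟨IsUnit.of_mul_eq_one _ key, by linear_combination (1 - C t * X) * key⟩
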